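/- Suppose k = 2 (so w = 0). For every P̂ ∈ Ŵ₀^Γ with decomposition P̂ = P + P⁰|(1−S) as above, writing P⁰(A) = c_A·X, one has Σ_{A ∈ Γ\Γ₁} c_A = 0, the sum being over any set of coset representatives. -/
import Mathlib


noncomputable section

open Matrix Polynomial Finset Filter MeasureTheory

abbrev SL2Z := Matrix.SpecialLinearGroup (Fin 2) ℤ

/-- the field of rational functions `ℂ(X)`. -/
abbrev RF := RatFunc ℂ

def mc (g : SL2Z) (i j : Fin 2) : ℂ := ((g : Matrix (Fin 2) (Fin 2) ℤ) i j : ℂ)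

def Sm : SL2Z := ⟨!![0, -1; 1, 0], by norm_num [Matrix.det_fin_two_of]⟩
def Tm : SL2Z := ⟨!![1, 1; 0, 1], by norm_num [Matrix.det_fin_two_of]⟩
def Um : SL2Z := Tm * Sm

def negSL (A : SL2Z) : SL2Z := ⟨-A.1, by simp [Matrix.det_neg, A.2]⟩

/-- the Möbius transform `(aX+b)/(cX+d)` as a rational function. -/
def mob (g : SL2Z) : RF :=
  (RatFunc.C (mc g 0 0) * RatFunc.X + RatFunc.C (mc g 0 1)) /
    (RatFunc.C (mc g 1 0) * RatFunc.X + RatFunc.C (mc g 1 1))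

/-- the weight `-w` right action on `ℂ(X)`: `(R|g)(X) = (cX+d)^w R((aX+b)/(cX+d))`. -/
def rfSlash (w : ℕ) (R : RF) (g : SL2Z) : RF :=
  (RatFunc.C (mc g 1 0) * RatFunc.X + RatFunc.C (mc g 1 1)) ^ w *
    (Polynomial.aeval (mob g) R.num / Polynomial.aeval (mob g) R.denom)

/-- right action on families: `(P|g)(A) = P(Ag⁻¹)|g`. -/
def famRf (w : ℕ) (P : SL2Z → RF) (g : SL2Z) : SL2Z → RF :=
  fun A => rfSlash w (P (A * g⁻¹)) g

/-- `V̂_w ⊂ ℂ(X)`, the span of `X^i` for `-1 ≤ i ≤ w+1`. -/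
def MemVhat (w : ℕ) (R : RF) : Prop :=
  ∃ c : ℤ → ℂ, R = ∑ i ∈ Finset.Icc (-1 : ℤ) ((w : ℤ) + 1), c i • RatFunc.X ^ i

/-- `V_w ⊂ ℂ(X)`, the polynomials of degree at most `w`. -/
def MemVpoly (w : ℕ) (R : RF) : Prop :=
  ∃ c : ℕ → ℂ, R = ∑ i ∈ Finset.range (w + 1), c i • RatFunc.X ^ i

/-- membership in `V̂_w^Γ`. -/
structure MemVhatG (Γ : Subgroup SL2Z) (w : ℕ) (P : SL2Z → RF) : Prop where
  mem : ∀ A, MemVhat w (P A)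
  inv : ∀ γ ∈ Γ, ∀ A, P (γ * A) = P A
  parity : ∀ A, P (negSL A) = (-1 : ℂ) ^ w • P A

/-- membership in `V_w^Γ` (with values polynomials of degree at most `w`). -/
structure MemVG (Γ : Subgroup SL2Z) (w : ℕ) (P : SL2Z → RF) : Prop where
  mem : ∀ A, MemVpoly w (P A)
  inv : ∀ γ ∈ Γ, ∀ A, P (γ * A) = P A
  parity : ∀ A, P (negSL A) = (-1 : ℂ) ^ w • P A

/-- the extended space of period polynomials `Ŵ_w^Γ`. -/
def MemWhatG (Γ : Subgroup SL2Z) (w : ℕ) (P : SL2Z → RF) : Prop :=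
  MemVhatG Γ w P ∧ (∀ A, P A + famRf w P Sm A = 0) ∧
    (∀ A, P A + famRf w P Um A + famRf w P (Um * Um) A = 0)

/-- the space of period polynomials `W_w^Γ` (inside `ℂ(X)`-valued maps). -/
def MemWG (Γ : Subgroup SL2Z) (w : ℕ) (P : SL2Z → RF) : Prop :=
  MemVG Γ w P ∧ (∀ A, P A + famRf w P Sm A = 0) ∧
    (∀ A, P A + famRf w P Um A + famRf w P (Um * Um) A = 0)

/-- the family `P⁰(A) = c_A X^{w+1}`. -/
def P0fun (w : ℕ) (c : SL2Z → ℂ) : SL2Z → RF :=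
  fun A => c A • RatFunc.X ^ (w + 1)

/-- the conditions on the coefficients `c_A` of `P⁰`. -/
def IsP0 (Γ : Subgroup SL2Z) (w : ℕ) (c : SL2Z → ℂ) : Prop :=
  (∀ γ ∈ Γ, ∀ A, c (γ * A) = c A) ∧ (∀ A, c (A * Tm) = c A) ∧
    (∀ A, c (negSL A) = (-1 : ℂ) ^ w * c A)

/-- `P̂ = P + P⁰|(1−S)` is the canonical decomposition of `P̂ ∈ Ŵ_w^Γ`. -/
def IsDecomp (Γ : Subgroup SL2Z) (w : ℕ) (Phat P : SL2Z → RF) (c : SL2Z → ℂ) : Prop :=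
  MemVG Γ w P ∧ IsP0 Γ w c ∧
    ∀ A, Phat A = P A + (P0fun w c A - famRf w (P0fun w c) Sm A)

/-- the pairing `⟨·,·⟩` on `V_w`, via coefficients. -/
def pairRF (w : ℕ) (R1 R2 : RF) : ℂ :=
  ∑ n ∈ Finset.range (w + 1),
    (-1 : ℂ) ^ (w - n) * ((w.choose n : ℂ))⁻¹ * R1.num.coeff n * R2.num.coeff (w - n)

/-- the pairing `⟪·,·⟫` on `V_w^Γ`, w.r.t. a set `Rt` of coset representatives of `Γ\Γ₁`. -/
def pairGrf (Γ : Subgroup SL2Z) (w : ℕ) (Rt : Finset SL2Z) (P Q : SL2Z → RF) : ℂ :=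
  ((Γ.index : ℂ))⁻¹ * ∑ A ∈ Rt, pairRF w (P A) (Q A)

/-- `Rt` is a set of representatives for the right cosets `Γ\Γ₁`. -/
def IsTransversal (Γ : Subgroup SL2Z) (Rt : Finset SL2Z) : Prop :=
  Subgroup.IsComplement (Γ : Set SL2Z) (Rt : Set SL2Z)

/-- the extended pairing `{P̂,Q̂}` on `Ŵ_w^Γ`, in terms of decompositions
`P̂ = P + P⁰|(1−S)`, `Q̂ = Q + Q⁰|(1−S)` with `P⁰(A) = c_A X^{w+1}`, `Q⁰(A) = c'_A X^{w+1}`. -/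
def extPair (Γ : Subgroup SL2Z) (k : ℤ) (w : ℕ) (Rt : Finset SL2Z)
    (P : SL2Z → RF) (c : SL2Z → ℂ) (Q : SL2Z → RF) (c' : SL2Z → ℂ) : ℂ :=
  pairGrf Γ w Rt (fun A => famRf w P Tm A - famRf w P Tm⁻¹ A) Q
    + pairGrf Γ w Rt
        (fun A => (2 : ℂ) • (famRf w (P0fun w c) Tm A - famRf w (P0fun w c) Tm⁻¹ A)) Q
    + pairGrf Γ w Rt P
        (fun A => (2 : ℂ) • (famRf w (P0fun w c') Tm⁻¹ A - famRf w (P0fun w c') Tm A))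
    + (if Even k then 0
        else 6 * ((k : ℂ) - 1) / ((k : ℂ) * (Γ.index : ℂ)) * ∑ A ∈ Rt, c A * c' A)

/-! ### Auxiliary material for statement15 -/

section Statement15Aux

local notation "ιp" => algebraMap (Polynomial ℂ) RF

lemma aeval_ratfuncX (q : Polynomial ℂ) :
    Polynomial.aeval (RatFunc.X : RF) q = ιp q := by
  have h : (RatFunc.X : RF) = (IsScalarTower.toAlgHom ℂ (Polynomial ℂ) RF) Polynomial.X :=
    (RatFunc.algebraMap_X).symm
  rw [h, Polynomial.aeval_algHom_apply, Polynomial.aeval_X_left_apply]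
  rfl

lemma transX : Transcendental ℂ (RatFunc.X : RF) := by
  rw [transcendental_iff]
  intro q hq
  rw [aeval_ratfuncX] at hq
  exact (RatFunc.algebraMap_injective ℂ) (by simpa using hq)

lemma trans_aeval_ne {m : RF} (hm : Transcendental ℂ m) {q : Polynomial ℂ} (hq : q ≠ 0) :
    Polynomial.aeval m q ≠ 0 := fun h => hq (transcendental_iff.mp hm q h)

lemma trans_ne_zero {m : RF} (hm : Transcendental ℂ m) : m ≠ 0 := by
  rintro rfl; exact hm isAlgebraic_zero

lemma trans_inv {m : RF} (hm : Transcendental ℂ m) : Transcendental ℂ m⁻¹ := by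
  intro hal
  exact hm (IsAlgebraic.inv_iff.mp hal)

lemma trans_neg {m : RF} (hm : Transcendental ℂ m) : Transcendental ℂ (-m) := by
  intro hal
  apply hm
  rw [isAlgebraic_iff_isIntegral] at hal ⊢
  simpa using hal.neg

lemma trans_add_C {m : RF} (hm : Transcendental ℂ m) (a : ℂ) :
    Transcendental ℂ (m + RatFunc.C a) := by
  intro hal
  apply hm
  rw [isAlgebraic_iff_isIntegral] at hal ⊢
  have h2 : IsIntegral ℂ (RatFunc.C a : RF) := by
    rw [← RatFunc.algebraMap_eq_C]; exact isIntegral_algebraMap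
  simpa using hal.sub h2

/-- `mob Sm` -/
def mS : RF := -(RatFunc.X : RF)⁻¹
/-- `mob Um` -/
def mU : RF := 1 - (RatFunc.X : RF)⁻¹
/-- `mob (Um * Um)` -/
def mU2 : RF := -((RatFunc.X : RF) - 1)⁻¹

lemma trans_mS : Transcendental ℂ mS := trans_neg (trans_inv transX)

lemma trans_mU : Transcendental ℂ mU := by
  have h := trans_add_C (trans_neg (trans_inv transX)) 1
  have h2 : mU = -(RatFunc.X : RF)⁻¹ + RatFunc.C 1 := by
    unfold mU; rw [_root_.map_one]; ring
  rw [h2]; exact h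

lemma trans_mU2 : Transcendental ℂ mU2 := by
  have h1 : Transcendental ℂ ((RatFunc.X : RF) - 1) := by
    have h := trans_add_C transX (-1)
    have h2 : (RatFunc.X : RF) - 1 = RatFunc.X + RatFunc.C (-1) := by
      rw [_root_.map_neg, _root_.map_one]; ring
    rw [h2]; exact h
  exact trans_neg (trans_inv h1)

lemma hxne : (RatFunc.X : RF) ≠ 0 := RatFunc.X_ne_zero

lemma hx1ne : (RatFunc.X : RF) - 1 ≠ 0 := by
  have : (RatFunc.X : RF) - 1 = ιp (Polynomial.X - 1) := by
    rw [_root_.map_sub, RatFunc.algebraMap_X, _root_.map_one]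
  rw [this]
  apply RatFunc.algebraMap_ne_zero
  simpa using Polynomial.X_sub_C_ne_zero (1 : ℂ)
lemma mob_Sm : mob Sm = mS := by
  have e00 : mc Sm 0 0 = 0 := by simp [mc, Sm]
  have e01 : mc Sm 0 1 = -1 := by simp [mc, Sm]
  have e10 : mc Sm 1 0 = 1 := by simp [mc, Sm]
  have e11 : mc Sm 1 1 = 0 := by simp [mc, Sm]
  rw [mob, e00, e01, e10, e11, mS]
  simp only [_root_.map_zero, _root_.map_one, _root_.map_neg, zero_mul, zero_add, one_mul,
    add_zero]
  rw [div_eq_iff hxne, neg_mul, inv_mul_cancel₀ hxne]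

lemma Um_mat : (Um : Matrix (Fin 2) (Fin 2) ℤ) = !![1, -1; 1, 0] := by
  rw [Um, Matrix.SpecialLinearGroup.coe_mul]
  show (Tm : Matrix (Fin 2) (Fin 2) ℤ) * (Sm : Matrix (Fin 2) (Fin 2) ℤ) = _
  rw [show (Tm : Matrix (Fin 2) (Fin 2) ℤ) = !![1,1;0,1] from rfl,
    show (Sm : Matrix (Fin 2) (Fin 2) ℤ) = !![0,-1;1,0] from rfl, Matrix.mul_fin_two]
  norm_num

lemma UmUm_mat : ((Um * Um : SL2Z) : Matrix (Fin 2) (Fin 2) ℤ) = !![0, -1; 1, -1] := by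
  rw [Matrix.SpecialLinearGroup.coe_mul, Um_mat, Matrix.mul_fin_two]
  norm_num

lemma mob_Um : mob Um = mU := by
  have e00 : mc Um 0 0 = 1 := by simp only [mc]; rw [Um_mat]; simp
  have e01 : mc Um 0 1 = -1 := by simp only [mc]; rw [Um_mat]; simp
  have e10 : mc Um 1 0 = 1 := by simp only [mc]; rw [Um_mat]; simp
  have e11 : mc Um 1 1 = 0 := by simp only [mc]; rw [Um_mat]; simp
  rw [mob, e00, e01, e10, e11, mU]
  simp only [_root_.map_zero, _root_.map_one, _root_.map_neg, one_mul, add_zero]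
  rw [div_eq_iff hxne, sub_mul, one_mul, inv_mul_cancel₀ hxne]
  ring

lemma mob_UmUm : mob (Um * Um) = mU2 := by
  have e00 : mc (Um * Um) 0 0 = 0 := by simp only [mc]; rw [UmUm_mat]; simp
  have e01 : mc (Um * Um) 0 1 = -1 := by simp only [mc]; rw [UmUm_mat]; simp
  have e10 : mc (Um * Um) 1 0 = 1 := by simp only [mc]; rw [UmUm_mat]; simp
  have e11 : mc (Um * Um) 1 1 = -1 := by simp only [mc]; rw [UmUm_mat]; simp
  rw [mob, e00, e01, e10, e11, mU2]
  simp only [_root_.map_zero, _root_.map_one, _root_.map_neg, zero_mul, zero_add, one_mul]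
  have hd : (RatFunc.X : RF) + -1 ≠ 0 := by rw [← sub_eq_add_neg]; exact hx1ne
  rw [div_eq_iff hd, ← sub_eq_add_neg, neg_mul, inv_mul_cancel₀ hx1ne]

/-- Key computation: the weight-0 slash action on `R = f/d` is substitution of `mob g`. -/
lemma rfSlash_eval {g : SL2Z} {m : RF} (hg : mob g = m) (hm : Transcendental ℂ m)
    {R : RF} {f d : Polynomial ℂ} (hd : d ≠ 0)
    (hR : R = ιp f / ιp d) :
    rfSlash 0 R g = Polynomial.aeval m f / Polynomial.aeval m d := by
  have hdenom : ιp R.denom ≠ 0 := RatFunc.algebraMap_ne_zero R.denom_ne_zero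
  have hdd : ιp d ≠ 0 := RatFunc.algebraMap_ne_zero hd
  have cross : R.num * d = f * R.denom := by
    apply RatFunc.algebraMap_injective ℂ
    rw [_root_.map_mul, _root_.map_mul]
    rw [← div_eq_div_iff hdenom hdd, RatFunc.num_div_denom, hR]
  have h1 : Polynomial.aeval m R.denom ≠ 0 := trans_aeval_ne hm R.denom_ne_zero
  have h2 : Polynomial.aeval m d ≠ 0 := trans_aeval_ne hm hd
  rw [rfSlash, pow_zero, one_mul, hg, div_eq_div_iff h1 h2]
  simpa only [_root_.map_mul] using congrArg (Polynomial.aeval m) cross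
/-- the quadratic polynomial `E + p Y + c Y²`. -/
def polEPC (E p c : ℂ) : Polynomial ℂ :=
  Polynomial.C E + Polynomial.C p * Polynomial.X + Polynomial.C c * Polynomial.X ^ 2

lemma algC (a : ℂ) : algebraMap ℂ RF a = RatFunc.C a := by rw [RatFunc.algebraMap_eq_C]

lemma aeval_polEPC (m : RF) (E p c : ℂ) :
    Polynomial.aeval m (polEPC E p c) =
      RatFunc.C E + RatFunc.C p * m + RatFunc.C c * m ^ 2 := by
  simp [polEPC, algC]

set_option maxHeartbeats 1000000 in
/-- Extraction of the constant coefficient from the `S`-relation. -/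
lemma Srel {E0 p0 c0 E1 p1 c1 : ℂ}
    (h : ιp (polEPC E0 p0 c0) / ιp Polynomial.X
        + Polynomial.aeval mS (polEPC E1 p1 c1) / Polynomial.aeval mS (Polynomial.X : Polynomial ℂ) = 0) :
    p0 + p1 = 0 := by
  have hmS : mS ≠ 0 := trans_ne_zero trans_mS
  rw [Polynomial.aeval_X, aeval_polEPC] at h
  rw [show ιp (polEPC E0 p0 c0) = RatFunc.C E0 + RatFunc.C p0 * RatFunc.X
        + RatFunc.C c0 * RatFunc.X ^ 2 by
      simp [polEPC, _root_.map_add, _root_.map_mul, _root_.map_pow, RatFunc.algebraMap_C, RatFunc.algebraMap_X],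
    RatFunc.algebraMap_X] at h
  rw [div_add_div _ _ hxne hmS, _root_.div_eq_zero_iff] at h
  have h2 := h.resolve_right (mul_ne_zero hxne hmS)
  have key : ιp (Polynomial.C (c0 - E1) * Polynomial.X ^ 2
      + Polynomial.C (p0 + p1) * Polynomial.X ^ 1 + Polynomial.C (E0 - c1)) =
      ((RatFunc.C E0 + RatFunc.C p0 * RatFunc.X + RatFunc.C c0 * RatFunc.X ^ 2) * mS
        + RatFunc.X * (RatFunc.C E1 + RatFunc.C p1 * mS + RatFunc.C c1 * mS ^ 2))
        * (-RatFunc.X) := by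
    simp only [mS, _root_.map_add, _root_.map_mul, _root_.map_pow, _root_.map_neg,
      _root_.map_sub, RatFunc.algebraMap_C, RatFunc.algebraMap_X]
    field_simp [hxne]
    ring
  rw [h2, zero_mul] at key
  have hq : Polynomial.C (c0 - E1) * Polynomial.X ^ 2
      + Polynomial.C (p0 + p1) * Polynomial.X ^ 1 + Polynomial.C (E0 - c1)
      = (0 : Polynomial ℂ) := by
    apply RatFunc.algebraMap_injective ℂ
    rw [_root_.map_zero]; exact key
  have h1 := congrArg (fun r => Polynomial.coeff r 1) hq
  simp only [Polynomial.coeff_add, Polynomial.coeff_C_mul, Polynomial.coeff_X_pow,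
    Polynomial.coeff_C, Polynomial.coeff_zero] at h1
  norm_num at h1
  linear_combination h1

/-- Extraction of the constant coefficient from the `U`-relation. -/
lemma Urel {E0 p0 c0 E1 p1 c1 E2 p2 c2 : ℂ}
    (h : ιp (polEPC E0 p0 c0) / ιp Polynomial.X
        + Polynomial.aeval mU (polEPC E1 p1 c1) / Polynomial.aeval mU (Polynomial.X : Polynomial ℂ)
        + Polynomial.aeval mU2 (polEPC E2 p2 c2) / Polynomial.aeval mU2 (Polynomial.X : Polynomial ℂ) = 0) :
    p0 + p1 + p2 + E1 + c1 + E2 = 0 := by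
  have hmU : mU ≠ 0 := trans_ne_zero trans_mU
  have hmU2 : mU2 ≠ 0 := trans_ne_zero trans_mU2
  rw [Polynomial.aeval_X, Polynomial.aeval_X, aeval_polEPC, aeval_polEPC] at h
  rw [show ιp (polEPC E0 p0 c0) = RatFunc.C E0 + RatFunc.C p0 * RatFunc.X
        + RatFunc.C c0 * RatFunc.X ^ 2 by
      simp [polEPC, _root_.map_add, _root_.map_mul, _root_.map_pow, RatFunc.algebraMap_C, RatFunc.algebraMap_X],
    RatFunc.algebraMap_X] at h
  rw [div_add_div _ _ hxne hmU, div_add_div _ _ (mul_ne_zero hxne hmU) hmU2,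
    _root_.div_eq_zero_iff] at h
  have h2 := h.resolve_right (mul_ne_zero (mul_ne_zero hxne hmU) hmU2)
  have keyA : (RatFunc.C E0 + RatFunc.C p0 * RatFunc.X + RatFunc.C c0 * RatFunc.X ^ 2)
        * mU * mU2 * (-(RatFunc.X * (RatFunc.X - 1))) =
      ιp ((Polynomial.C E0 + Polynomial.C p0 * Polynomial.X
        + Polynomial.C c0 * Polynomial.X ^ 2) * (Polynomial.X - 1)) := by
    simp only [mU, mU2, _root_.map_add, _root_.map_mul, _root_.map_pow, _root_.map_neg,
      _root_.map_sub, _root_.map_one, RatFunc.algebraMap_C, RatFunc.algebraMap_X]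
    field_simp [hxne, hx1ne]
    try ring
  have keyB : RatFunc.X * (RatFunc.C E1 + RatFunc.C p1 * mU + RatFunc.C c1 * mU ^ 2)
        * mU2 * (-(RatFunc.X * (RatFunc.X - 1))) =
      ιp (Polynomial.C E1 * Polynomial.X ^ 2
        + Polynomial.C p1 * (Polynomial.X * (Polynomial.X - 1))
        + Polynomial.C c1 * (Polynomial.X - 1) ^ 2) := by
    simp only [mU, mU2, _root_.map_add, _root_.map_mul, _root_.map_pow, _root_.map_neg,
      _root_.map_sub, _root_.map_one, RatFunc.algebraMap_C, RatFunc.algebraMap_X]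
    field_simp [hxne, hx1ne]
    try ring
  have keyC : RatFunc.X * mU * (RatFunc.C E2 + RatFunc.C p2 * mU2 + RatFunc.C c2 * mU2 ^ 2)
        * (-(RatFunc.X * (RatFunc.X - 1))) =
      ιp (-(Polynomial.X * (Polynomial.C E2 * (Polynomial.X - 1) ^ 2
        - Polynomial.C p2 * (Polynomial.X - 1) + Polynomial.C c2))) := by
    simp only [mU, mU2, _root_.map_add, _root_.map_mul, _root_.map_pow, _root_.map_neg,
      _root_.map_sub, _root_.map_one, RatFunc.algebraMap_C, RatFunc.algebraMap_X]
    field_simp [hxne, hx1ne]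
    try ring
  have key : ιp (Polynomial.C (c0 - E2) * Polynomial.X ^ 3
      + Polynomial.C (p0 + E1 + p1 + c1 + E2 + E2 + p2 - c0) * Polynomial.X ^ 2
      + Polynomial.C (E0 - p0 - p1 - c1 - c1 - E2 - p2 - c2) * Polynomial.X ^ 1
      + Polynomial.C (c1 - E0)) =
      (((RatFunc.C E0 + RatFunc.C p0 * RatFunc.X + RatFunc.C c0 * RatFunc.X ^ 2) * mU
          + RatFunc.X * (RatFunc.C E1 + RatFunc.C p1 * mU + RatFunc.C c1 * mU ^ 2)) * mU2
        + RatFunc.X * mU * (RatFunc.C E2 + RatFunc.C p2 * mU2 + RatFunc.C c2 * mU2 ^ 2))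
        * (-(RatFunc.X * (RatFunc.X - 1))) := by
    have expand : (((RatFunc.C E0 + RatFunc.C p0 * RatFunc.X
            + RatFunc.C c0 * RatFunc.X ^ 2) * mU
          + RatFunc.X * (RatFunc.C E1 + RatFunc.C p1 * mU + RatFunc.C c1 * mU ^ 2)) * mU2
        + RatFunc.X * mU * (RatFunc.C E2 + RatFunc.C p2 * mU2 + RatFunc.C c2 * mU2 ^ 2))
        * (-(RatFunc.X * (RatFunc.X - 1)))
        = (RatFunc.C E0 + RatFunc.C p0 * RatFunc.X + RatFunc.C c0 * RatFunc.X ^ 2)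
            * mU * mU2 * (-(RatFunc.X * (RatFunc.X - 1)))
          + RatFunc.X * (RatFunc.C E1 + RatFunc.C p1 * mU + RatFunc.C c1 * mU ^ 2)
            * mU2 * (-(RatFunc.X * (RatFunc.X - 1)))
          + RatFunc.X * mU * (RatFunc.C E2 + RatFunc.C p2 * mU2 + RatFunc.C c2 * mU2 ^ 2)
            * (-(RatFunc.X * (RatFunc.X - 1))) := by ring
    rw [expand, keyA, keyB, keyC, ← _root_.map_add, ← _root_.map_add]
    exact congrArg ιp (by simp only [Polynomial.C_sub, Polynomial.C_add]; ring)
  rw [h2, zero_mul] at key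
  have hq : Polynomial.C (c0 - E2) * Polynomial.X ^ 3
      + Polynomial.C (p0 + E1 + p1 + c1 + E2 + E2 + p2 - c0) * Polynomial.X ^ 2
      + Polynomial.C (E0 - p0 - p1 - c1 - c1 - E2 - p2 - c2) * Polynomial.X ^ 1
      + Polynomial.C (c1 - E0) = (0 : Polynomial ℂ) := by
    apply RatFunc.algebraMap_injective ℂ
    rw [_root_.map_zero]; exact key
  have h3 := congrArg (fun r => Polynomial.coeff r 3) hq
  have h4 := congrArg (fun r => Polynomial.coeff r 2) hq
  simp only [Polynomial.coeff_add, Polynomial.coeff_C_mul, Polynomial.coeff_X_pow,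
    Polynomial.coeff_C, Polynomial.coeff_zero] at h3 h4
  norm_num at h3 h4
  linear_combination h3 + h4

/-- choice of representative in `Rt` for the coset of `x`. -/
noncomputable def reprT {Γ : Subgroup SL2Z} {Rt : Finset SL2Z}
    (hRt : IsTransversal Γ Rt) (x : SL2Z) : SL2Z :=
  ((hRt.existsUnique x).choose.2 : SL2Z)

lemma reprT_mem {Γ : Subgroup SL2Z} {Rt : Finset SL2Z}
    (hRt : IsTransversal Γ Rt) (x : SL2Z) : reprT hRt x ∈ Rt := by
  have h := (hRt.existsUnique x).choose.2.2
  simpa [reprT] using h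

lemma reprT_spec {Γ : Subgroup SL2Z} {Rt : Finset SL2Z}
    (hRt : IsTransversal Γ Rt) (x : SL2Z) :
    ∃ γ ∈ Γ, γ * reprT hRt x = x := by
  refine ⟨(hRt.existsUnique x).choose.1, (hRt.existsUnique x).choose.1.2, ?_⟩
  exact (hRt.existsUnique x).choose_spec.1

lemma reprT_uniq {Γ : Subgroup SL2Z} {Rt : Finset SL2Z}
    (hRt : IsTransversal Γ Rt) {x γ t : SL2Z} (hγ : γ ∈ Γ) (ht : t ∈ Rt)
    (hm : γ * t = x) : reprT hRt x = t := by
  have h := (hRt.existsUnique x).choose_spec.2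
    (⟨⟨γ, hγ⟩, ⟨t, by simpa using ht⟩⟩ :
      ↥(Γ : Set SL2Z) × ↥(Rt : Set SL2Z)) hm
  simp only [reprT]
  rw [← h]

lemma reprT_left {Γ : Subgroup SL2Z} {Rt : Finset SL2Z}
    (hRt : IsTransversal Γ Rt) {γ : SL2Z} (hγ : γ ∈ Γ) (x : SL2Z) :
    reprT hRt (γ * x) = reprT hRt x := by
  obtain ⟨γ0, hγ0, hfac⟩ := reprT_spec hRt x
  exact reprT_uniq hRt (Γ.mul_mem hγ hγ0) (reprT_mem hRt x)
    (by rw [mul_assoc, hfac])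

lemma reprT_of_mem {Γ : Subgroup SL2Z} {Rt : Finset SL2Z}
    (hRt : IsTransversal Γ Rt) {t : SL2Z} (ht : t ∈ Rt) : reprT hRt t = t :=
  reprT_uniq hRt Γ.one_mem ht (one_mul t)

lemma reprT_apply {Γ : Subgroup SL2Z} {Rt : Finset SL2Z}
    (hRt : IsTransversal Γ Rt) {f : SL2Z → ℂ}
    (hf : ∀ γ ∈ Γ, ∀ A, f (γ * A) = f A) (x : SL2Z) :
    f x = f (reprT hRt x) := by
  obtain ⟨γ0, hγ0, hfac⟩ := reprT_spec hRt x
  conv_lhs => rw [← hfac]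
  exact hf γ0 hγ0 _

lemma sum_coset_invariant {Γ : Subgroup SL2Z} {Rt : Finset SL2Z}
    (hRt : IsTransversal Γ Rt) (f : SL2Z → ℂ)
    (hf : ∀ γ ∈ Γ, ∀ A, f (γ * A) = f A) (g : SL2Z) :
    ∑ A ∈ Rt, f (A * g) = ∑ A ∈ Rt, f A := by
  have main : ∀ (u : SL2Z) (a : SL2Z), a ∈ Rt → reprT hRt (reprT hRt (a * u) * u⁻¹) = a := by
    intro u a ha
    obtain ⟨γ, hγ, hfac⟩ := reprT_spec hRt (a * u)
    have h1 : reprT hRt (a * u) * u⁻¹ = γ⁻¹ * a := by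
      have h := congrArg (fun z => γ⁻¹ * z * u⁻¹) hfac
      simpa [mul_assoc] using h
    rw [h1, reprT_left hRt (Γ.inv_mem hγ), reprT_of_mem hRt ha]
  refine Finset.sum_nbij' (fun A => reprT hRt (A * g)) (fun A => reprT hRt (A * g⁻¹))
    (fun a _ => reprT_mem hRt _) (fun a _ => reprT_mem hRt _)
    (fun a ha => main g a ha) (fun a ha => by simpa using main g⁻¹ a ha)
    (fun a _ => reprT_apply hRt hf _)
end Statement15Aux

section Statement15Aux
local notation "ιp" => algebraMap (Polynomial ℂ) RF

/-- for `k = 2` (so `w = 0`), the coefficients `c_A` of the decomposition of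
any `P̂ ∈ Ŵ₀^Γ` satisfy `Σ_{A ∈ Γ\Γ₁} c_A = 0`. -/
theorem statement15 (Γ : Subgroup SL2Z) [Γ.FiniteIndex]
    (Phat : SL2Z → RF) (hPhat : MemWhatG Γ 0 Phat)
    (P : SL2Z → RF) (c : SL2Z → ℂ) (hdec : IsDecomp Γ 0 Phat P c)
    (Rt : Finset SL2Z) (hRt : IsTransversal Γ Rt) :
    ∑ A ∈ Rt, c A = 0 := by
  classical
  obtain ⟨hPmem, hcP0, hdecomp⟩ := hdec
  -- `P A` is a constant rational function
  have hPconst : ∀ A, ∃ a : ℂ, P A = RatFunc.C a := by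
    intro A
    obtain ⟨cf, hcf⟩ := hPmem.mem A
    exact ⟨cf 0, by simpa [RatFunc.smul_eq_C_mul] using hcf⟩
  choose p hp using hPconst
  have hpinv : ∀ γ ∈ Γ, ∀ A, p (γ * A) = p A := by
    intro γ hγ A
    have h1 : RatFunc.C (p (γ * A)) = RatFunc.C (p A) := by
      rw [← hp, ← hp]; exact hPmem.inv γ hγ A
    have h2 := congrArg (fun z => z) h1
    rw [← RatFunc.algebraMap_eq_C] at h1
    exact (algebraMap ℂ RF).injective h1
  -- explicit form of `Phat`
  have hPhatrep : ∀ B, Phat B =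
      ιp (polEPC (c (B * Sm⁻¹)) (p B) (c B)) / ιp Polynomial.X := by
    intro B
    rw [hdecomp B, hp B]
    have hrep : P0fun 0 c (B * Sm⁻¹) =
        ιp (Polynomial.C (c (B * Sm⁻¹)) * Polynomial.X) / ιp 1 := by
      simp [P0fun, RatFunc.smul_eq_C_mul, RatFunc.algebraMap_C, RatFunc.algebraMap_X]
    have hfam : famRf 0 (P0fun 0 c) Sm B = RatFunc.C (c (B * Sm⁻¹)) * mS := by
      simp only [famRf]
      rw [rfSlash_eval mob_Sm trans_mS one_ne_zero hrep]
      simp [algC]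
    have hP0B : P0fun 0 c B = RatFunc.C (c B) * RatFunc.X := by
      simp [P0fun, RatFunc.smul_eq_C_mul]
    rw [hfam, hP0B]
    simp only [polEPC, mS, _root_.map_add, _root_.map_mul, _root_.map_pow, RatFunc.algebraMap_C,
      RatFunc.algebraMap_X]
    field_simp [hxne]
    ring
  -- the S-relation at the level of constants
  have hS : ∀ A, p A + p (A * Sm⁻¹) = 0 := by
    intro A
    have h := hPhat.2.1 A
    simp only [famRf] at h
    rw [hPhatrep A,
      rfSlash_eval mob_Sm trans_mS Polynomial.X_ne_zero (hPhatrep (A * Sm⁻¹))] at h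
    exact Srel h
  -- the U-relation at the level of constants
  have hU : ∀ A, p A + p (A * Um⁻¹) + p (A * (Um * Um)⁻¹)
      + c (A * Um⁻¹ * Sm⁻¹) + c (A * Um⁻¹) + c (A * (Um * Um)⁻¹ * Sm⁻¹) = 0 := by
    intro A
    have h := hPhat.2.2 A
    simp only [famRf] at h
    rw [hPhatrep A,
      rfSlash_eval mob_Um trans_mU Polynomial.X_ne_zero (hPhatrep (A * Um⁻¹)),
      rfSlash_eval mob_UmUm trans_mU2 Polynomial.X_ne_zero (hPhatrep (A * (Um * Um)⁻¹))] at h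
    exact Urel h
  -- summing over the transversal
  have sump : ∀ g : SL2Z, ∑ A ∈ Rt, p (A * g) = ∑ A ∈ Rt, p A :=
    fun g => sum_coset_invariant hRt p hpinv g
  have sumc : ∀ g : SL2Z, ∑ A ∈ Rt, c (A * g) = ∑ A ∈ Rt, c A :=
    fun g => sum_coset_invariant hRt c hcP0.1 g
  have hSsum : ∑ A ∈ Rt, p A = 0 := by
    have h1 : ∑ A ∈ Rt, (p A + p (A * Sm⁻¹)) = 0 :=
      Finset.sum_eq_zero fun A _ => hS A
    rw [Finset.sum_add_distrib, sump Sm⁻¹] at h1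
    linear_combination h1 / 2
  have hUsum : (3 : ℂ) * ∑ A ∈ Rt, p A + (3 : ℂ) * ∑ A ∈ Rt, c A = 0 := by
    have h1 : ∑ A ∈ Rt, (p A + p (A * Um⁻¹) + p (A * (Um * Um)⁻¹)
        + c (A * Um⁻¹ * Sm⁻¹) + c (A * Um⁻¹) + c (A * (Um * Um)⁻¹ * Sm⁻¹)) = 0 :=
      Finset.sum_eq_zero fun A _ => hU A
    simp only [mul_assoc] at h1
    simp only [Finset.sum_add_distrib] at h1
    rw [sump, sump, sumc, sumc, sumc] at h1
    linear_combination h1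
  rw [hSsum, mul_zero, zero_add] at hUsum
  linear_combination hUsum / 3

end Statement15Aux
end
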